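/- If u ∈ H¹(c,d) with u(c) = -1 and u(d) = 1, then for every ε > 0, ∫_c^d [ (ε/2) D(u) u_x² + F(u)/ε ] dx ≥ γ, where γ := ∫_{-1}^{1} √(2 D(s) F(s)) ds and D, F are continuous nonnegative functions. -/

import Mathlib

open Set intervalIntegral

/-- The minimal transition energy: any `H¹` function connecting `-1` to `1` on `(c,d)`
has energy at least `γ = ∫_{-1}^1 √(2 D F)`. -/
theorem energy_lower_bound_transition
    (D F u u' : ℝ → ℝ) (c d ε : ℝ) (hcd : c < d) (hε : 0 < ε)
    (hD : Continuous D) (hDpos : ∀ s, 0 ≤ D s)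
    (hF : Continuous F) (hFpos : ∀ s, 0 ≤ F s)
    (hu : ∀ x ∈ Icc c d, HasDerivAt u (u' x) x)
    (hu' : ContinuousOn u' (Icc c d))
    (huc : u c = -1) (hud : u d = 1) :
    (∫ s in (-1:ℝ)..1, Real.sqrt (2 * D s * F s)) ≤
      ∫ x in c..d, (ε / 2 * D (u x) * (u' x) ^ 2 + F (u x) / ε) := by
  set g : ℝ → ℝ := fun s => Real.sqrt (2 * D s * F s) with hg
  have hgcont : Continuous g := ((continuous_const.mul hD).mul hF).sqrt
  have huIcc : uIcc c d = Icc c d := uIcc_of_le hcd.le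
  have huCont : ContinuousOn u (Icc c d) := fun x hx => (hu x hx).continuousAt.continuousWithinAt
  have key : (∫ s in (-1:ℝ)..1, g s) = ∫ x in c..d, u' x * g (u x) := by
    rw [← huc, ← hud,
      ← intervalIntegral.integral_comp_smul_deriv (f := u) (f' := u') (g := g)
        (fun x hx => hu x (huIcc ▸ hx)) (huIcc ▸ hu') hgcont]
    simp [Function.comp]
  rw [key]
  apply intervalIntegral.integral_mono_on hcd.le
  · exact ((hu'.mul (hgcont.comp_continuousOn huCont))).intervalIntegrable_of_Icc hcd.le
  · have : ContinuousOn (fun x => ε / 2 * D (u x) * (u' x) ^ 2 + F (u x) / ε) (Icc c d) := by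
      exact (((continuousOn_const.mul (hD.comp_continuousOn huCont)).mul (hu'.pow 2)).add
        ((hF.comp_continuousOn huCont).div_const ε))
    exact this.intervalIntegrable_of_Icc hcd.le
  · intro x hx
    set a := D (u x) with ha
    set b := F (u x) with hb
    set v := u' x with hv
    have hann : 0 ≤ a := hDpos _
    have hbnn : 0 ≤ b := hFpos _
    have hsnn : 0 ≤ g (u x) := Real.sqrt_nonneg _
    have hs2 : g (u x) ^ 2 = 2 * a * b := Real.sq_sqrt (by positivity)
    set s := g (u x)
    show v * s ≤ ε / 2 * a * v ^ 2 + b / ε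
    rcases eq_or_lt_of_le hbnn with hb0 | hbpos
    · have : s = 0 := by
        have : s ^ 2 = 0 := by rw [hs2, ← hb0]; ring
        nlinarith [hsnn]
      rw [this]
      have : 0 ≤ ε / 2 * a * v ^ 2 := by positivity
      have hb' : b / ε = 0 := by rw [← hb0]; simp
      nlinarith
    · have hεb : 0 < ε * b := mul_pos hε hbpos
      rw [← mul_le_mul_iff_of_pos_left hεb]
      have hrhs : ε * b * (ε / 2 * a * v ^ 2 + b / ε) = ε ^ 2 * a * b * v ^ 2 / 2 + b ^ 2 := by
        field_simp
      rw [hrhs]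
      nlinarith [sq_nonneg (ε * v * s - 2 * b), hs2, sq_nonneg (ε * v)]
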